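/- arXiv:1701.00429 — 2 statements merged into one kernel-verified Lean document; each statement's English description precedes it below -/
import Mathlib

section
/- (Lemma 4.9, first inversion formula) For every p ∈ {0, …, n} and every 0 ≤ j ≤ l_p, setting q = a_j^{(p)}, one has l_q† ≥ j and a_j^{(q)†} = p. -/
/-- `d(p) = max { s j : t j ≤ p }`, with `⊥` meaning "undefined" (i.e. `-∞`). -/
noncomputable def dvalue (m : ℕ) (s t : ℕ → ℤ) (p : ℤ) : WithBot ℤ :=
  ((Finset.range m).filter (fun j => t j ≤ p)).sup (fun j => (s j : WithBot ℤ))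

/-- `d†(p) = min { t j : s j ≥ p }`, with `⊤` meaning "undefined" (i.e. `+∞`). -/
noncomputable def ddual (m : ℕ) (s t : ℕ → ℤ) (p : ℤ) : WithTop ℤ :=
  ((Finset.range m).filter (fun j => p ≤ s j)).inf (fun j => (t j : WithTop ℤ))

/-- The extension of `d` to `WithBot ℤ`, sending `⊥` to `⊥`. -/
noncomputable def dW (m : ℕ) (s t : ℕ → ℤ) : WithBot ℤ → WithBot ℤ :=
  WithBot.recBotCoe ⊥ (dvalue m s t)

/-- The extension of `d†` to `WithTop ℤ`, sending `⊤` to `⊤`. -/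
noncomputable def dtW (m : ℕ) (s t : ℕ → ℤ) : WithTop ℤ → WithTop ℤ :=
  WithTop.recTopCoe ⊤ (ddual m s t)

/-- The (total extension of the) sequence `a_i^{(p)}`:
`a_0 = p`, `a_1 = p - 1`, `a_{i+2} = d(a_i)`.  For `i ≤ l_p` this agrees with the
sequence of the paper. -/
noncomputable def aSeq (m : ℕ) (s t : ℕ → ℤ) (p : ℤ) : ℕ → WithBot ℤ
  | 0 => (p : WithBot ℤ)
  | 1 => ((p - 1 : ℤ) : WithBot ℤ)
  | i + 2 => dW m s t (aSeq m s t p i)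

/-- The length `l_p`: `l_0 = 0`, and for `p ≠ 0` it is the least `j ≥ 1` with
`d(a_{j-1}^{(p)}) = d(a_j^{(p)})` (undefined values compared as `⊥`). -/
noncomputable def lSeq (m : ℕ) (s t : ℕ → ℤ) (p : ℤ) : ℕ :=
  if p = 0 then 0
  else sInf {j : ℕ | 1 ≤ j ∧ dW m s t (aSeq m s t p (j - 1)) = dW m s t (aSeq m s t p j)}

/-- The (total extension of the) dual sequence `a_i^{(p)†}`:
`a_0 = p`, `a_1 = p + 1`, `a_{i+2} = d†(a_i)`. -/
noncomputable def aSeqD (m : ℕ) (s t : ℕ → ℤ) (p : ℤ) : ℕ → WithTop ℤ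
  | 0 => (p : WithTop ℤ)
  | 1 => ((p + 1 : ℤ) : WithTop ℤ)
  | i + 2 => dtW m s t (aSeqD m s t p i)

/-- The dual length `l_p†`: `l_n† = 0`, and for `p ≠ n` it is the least `j ≥ 1` with
`d†(a_{j-1}^{(p)†}) = d†(a_j^{(p)†})` (undefined values compared as `⊤`). -/
noncomputable def lSeqD (n : ℤ) (m : ℕ) (s t : ℕ → ℤ) (p : ℤ) : ℕ :=
  if p = n then 0
  else sInf {j : ℕ | 1 ≤ j ∧ dtW m s t (aSeqD m s t p (j - 1)) = dtW m s t (aSeqD m s t p j)}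

section AuxLemmas

variable (m : ℕ) (s t : ℕ → ℤ)

lemma dvalue_le_sub_two (hlen : ∀ j : ℕ, j < m → s j + 2 ≤ t j) (x : ℤ) :
    dvalue m s t x ≤ ((x - 2 : ℤ) : WithBot ℤ) := by
  apply Finset.sup_le
  intro k hk
  simp only [Finset.mem_filter, Finset.mem_range] at hk
  exact_mod_cast (by linarith [hlen k hk.1] : s k ≤ x - 2)

lemma dvalue_mono {x y : ℤ} (h : x ≤ y) : dvalue m s t x ≤ dvalue m s t y := by
  apply Finset.sup_mono
  intro k hk
  simp only [Finset.mem_filter, Finset.mem_range] at hk ⊢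
  exact ⟨hk.1, hk.2.trans h⟩

lemma dW_mono {x y : WithBot ℤ} (h : x ≤ y) : dW m s t x ≤ dW m s t y := by
  induction x using WithBot.recBotCoe with
  | bot => exact bot_le
  | coe x =>
    induction y using WithBot.recBotCoe with
    | bot => exact absurd h (by simp)
    | coe y =>
      show dvalue m s t x ≤ dvalue m s t y
      exact dvalue_mono m s t (by exact_mod_cast h)

lemma dvalue_eq_coe {x A : ℤ} (h : dvalue m s t x = (A : WithBot ℤ)) :
    ∃ k, k < m ∧ t k ≤ x ∧ s k = A := by
  set F := (Finset.range m).filter (fun j => t j ≤ x) with hF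
  have hne : F.Nonempty := by
    by_contra hne
    rw [Finset.not_nonempty_iff_eq_empty] at hne
    rw [dvalue, ← hF, hne, Finset.sup_empty] at h
    exact (WithBot.bot_ne_coe h).elim
  obtain ⟨k, hk, hsup⟩ := Finset.exists_mem_eq_sup F hne (fun j => (s j : WithBot ℤ))
  rw [dvalue, ← hF, hsup] at h
  simp only [hF, Finset.mem_filter, Finset.mem_range] at hk
  exact ⟨k, hk.1, hk.2, by exact_mod_cast h⟩

lemma ddual_le {k : ℕ} {B : ℤ} (hk : k < m) (h : B ≤ s k) :
    ddual m s t B ≤ ((t k : ℤ) : WithTop ℤ) :=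
  Finset.inf_le (by simp [Finset.mem_filter, Finset.mem_range, hk, h])

lemma ddual_ge (hlen : ∀ j : ℕ, j < m → s j + 2 ≤ t j) (B : ℤ) :
    ((B + 2 : ℤ) : WithTop ℤ) ≤ ddual m s t B := by
  apply Finset.le_inf
  intro k hk
  simp only [Finset.mem_filter, Finset.mem_range] at hk
  exact_mod_cast (by linarith [hlen k hk.1] : B + 2 ≤ t k)

lemma ddual_top {n : ℤ} (htn : ∀ j : ℕ, j < m → t j ≤ n)
    (hlen : ∀ j : ℕ, j < m → s j + 2 ≤ t j) {B : ℤ} (h : n - 1 ≤ B) :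
    ddual m s t B = ⊤ := by
  rw [ddual, Finset.filter_false_of_mem, Finset.inf_empty]
  intro k hk
  simp only [Finset.mem_range] at hk
  have := htn k hk; have := hlen k hk
  simp only [not_le]; linarith

lemma lower_key {x B : ℤ} (h : dvalue m s t x < (B : WithBot ℤ)) :
    ((x : ℤ) : WithTop ℤ) < ddual m s t B := by
  have h1 : ((x + 1 : ℤ) : WithTop ℤ) ≤ ddual m s t B := by
    apply Finset.le_inf
    intro l hl
    simp only [Finset.mem_filter, Finset.mem_range] at hl
    have hlt : x < t l := by
      by_contra hc
      push_neg at hc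
      have hmem : l ∈ (Finset.range m).filter (fun j => t j ≤ x) := by
        simp [Finset.mem_filter, Finset.mem_range, hl.1, hc]
      have h2 := Finset.le_sup (f := fun j => (s j : WithBot ℤ)) hmem
      have h3 : ((s l : ℤ) : WithBot ℤ) < (B : WithBot ℤ) := lt_of_le_of_lt h2 h
      have : s l < B := by exact_mod_cast h3
      linarith [hl.2]
    exact_mod_cast hlt
  calc ((x : ℤ) : WithTop ℤ) < ((x + 1 : ℤ) : WithTop ℤ) := by
        exact_mod_cast (by linarith : x < x + 1)
    _ ≤ _ := h1

end AuxLemmas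


theorem inversion_formula_first
    (n : ℤ) (m : ℕ) (s t : ℕ → ℤ)
    (hn : 0 ≤ n)
    (hsmono : ∀ i j : ℕ, i < j → j < m → s i < s j)
    (htmono : ∀ i j : ℕ, i < j → j < m → t i < t j)
    (hs0 : ∀ j : ℕ, j < m → 0 ≤ s j)
    (htn : ∀ j : ℕ, j < m → t j ≤ n)
    (hlen : ∀ j : ℕ, j < m → s j + 2 ≤ t j)
    (p : ℤ) (hp0 : 0 ≤ p) (hpn : p ≤ n)
    (j : ℕ) (hj : j ≤ lSeq m s t p)
    (q : ℤ) (hq : aSeq m s t p j = (q : WithBot ℤ)) :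
    j ≤ lSeqD n m s t q ∧ aSeqD m s t q j = (p : WithTop ℤ) := by
  have arec : ∀ i, aSeq m s t p (i + 2) = dW m s t (aSeq m s t p i) := fun i => rfl
  have brec : ∀ i, aSeqD m s t q (i + 2) = dtW m s t (aSeqD m s t q i) := fun i => rfl
  -- dispose of the case j = 0
  rcases Nat.eq_zero_or_pos j with hj0 | hjpos
  · subst hj0
    have hpq : p = q := by
      have : (p : WithBot ℤ) = (q : WithBot ℤ) := hq
      exact_mod_cast this
    exact ⟨Nat.zero_le _, by rw [← hpq]; rfl⟩
  -- main case : j ≥ 1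
  have hpne : p ≠ 0 := by
    intro h
    rw [lSeq, if_pos h] at hj
    omega
  rw [lSeq, if_neg hpne] at hj
  -- non-degeneracy on the a-side
  have H : ∀ r, 2 ≤ r → r ≤ j → aSeq m s t p r ≠ aSeq m s t p (r + 1) := by
    intro r h2 hrj hEq
    have c1 := (arec (r - 2)).symm
    rw [show r - 2 + 2 = r from by omega] at c1
    have c2 := (arec (r - 1)).symm
    rw [show r - 1 + 2 = r + 1 from by omega] at c2
    have hmem : (r - 1) ∈ {i : ℕ | 1 ≤ i ∧
        dW m s t (aSeq m s t p (i - 1)) = dW m s t (aSeq m s t p i)} := by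
      refine ⟨by omega, ?_⟩
      rw [show r - 1 - 1 = r - 2 from by omega, c1, c2]
      exact hEq
    have := Nat.sInf_le hmem
    omega
  -- a-side key lemma : integrality and strict decrease
  have key : ∀ i, i ≤ j → (∃ A : ℤ, aSeq m s t p i = (A : WithBot ℤ)) ∧
      aSeq m s t p (i + 1) < aSeq m s t p i := by
    intro i
    induction i using Nat.strong_induction_on with
    | _ i IH =>
      match i with
      | 0 =>
        intro _
        refine ⟨⟨p, rfl⟩, ?_⟩
        show ((p - 1 : ℤ) : WithBot ℤ) < ((p : ℤ) : WithBot ℤ)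
        exact_mod_cast (by linarith : p - 1 < p)
      | 1 =>
        intro _
        refine ⟨⟨p - 1, rfl⟩, ?_⟩
        show dW m s t (aSeq m s t p 0) < ((p - 1 : ℤ) : WithBot ℤ)
        have h1 : dW m s t (aSeq m s t p 0) = dvalue m s t p := rfl
        rw [h1]
        calc dvalue m s t p ≤ ((p - 2 : ℤ) : WithBot ℤ) := dvalue_le_sub_two m s t hlen p
          _ < ((p - 1 : ℤ) : WithBot ℤ) := by exact_mod_cast (by linarith : p - 2 < p - 1)
      | (i + 2) =>
        intro hle
        obtain ⟨_, hdec⟩ := IH i (by omega) (by omega)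
        have hmono : aSeq m s t p (i + 1 + 2) ≤ aSeq m s t p (i + 2) := by
          rw [arec (i + 1), arec i]
          exact dW_mono m s t hdec.le
        have hne := H (i + 2) (by omega) hle
        have hne' : aSeq m s t p (i + 2) ≠ aSeq m s t p (i + 1 + 2) := hne
        constructor
        · rcases eq_or_ne (aSeq m s t p (i + 2)) ⊥ with hbot | hnb
          · exfalso
            have hb2 : aSeq m s t p (i + 1 + 2) = ⊥ := le_bot_iff.mp (hbot ▸ hmono)
            exact hne' (hbot.trans hb2.symm)
          · obtain ⟨A, hA⟩ := WithBot.ne_bot_iff_exists.mp hnb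
            exact ⟨A, hA.symm⟩
        · exact lt_of_le_of_ne hmono (fun h => hne' h.symm)
  -- the sandwich invariant on the b-side
  have sand : ∀ i, i ≤ j → ∃ B : ℤ, aSeqD m s t q i = (B : WithTop ℤ) ∧
      aSeq m s t p (j - i + 1) < (B : WithBot ℤ) ∧
      ((B : ℤ) : WithBot ℤ) ≤ aSeq m s t p (j - i) := by
    intro i
    induction i using Nat.strong_induction_on with
    | _ i IH =>
      match i with
      | 0 =>
        intro _
        refine ⟨q, rfl, ?_, ?_⟩
        · have := (key j le_rfl).2
          rw [hq] at this
          simpa using this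
        · simp [hq]
      | 1 =>
        intro h1j
        refine ⟨q + 1, rfl, ?_, ?_⟩
        · rw [show j - 1 + 1 = j from by omega, hq]
          exact_mod_cast (by linarith : q < q + 1)
        · obtain ⟨⟨A, hA⟩, hdec⟩ := key (j - 1) (by omega)
          rw [show j - 1 + 1 = j from by omega, hq] at hdec
          rw [hA] at hdec ⊢
          have : q < A := by exact_mod_cast hdec
          exact_mod_cast (by linarith : q + 1 ≤ A)
      | (i + 2) =>
        intro hle
        obtain ⟨B, hBi, hlo, hhi⟩ := IH i (by omega) (by omega)
        obtain ⟨r, hr⟩ : ∃ r, j - i = r + 2 := ⟨j - i - 2, by omega⟩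
        obtain ⟨⟨Ar, hAr⟩, _⟩ := key r (by omega)
        obtain ⟨⟨Ar1, hAr1⟩, _⟩ := key (r + 1) (by omega)
        obtain ⟨⟨Ar2, hAr2⟩, _⟩ := key (r + 2) (by omega)
        have hdv : dvalue m s t Ar = (Ar2 : WithBot ℤ) := by
          have h1 : dW m s t ((Ar : ℤ) : WithBot ℤ) = (Ar2 : WithBot ℤ) := by
            rw [← hAr, ← arec r, hAr2]
          exact h1
        obtain ⟨k, hkm, htk, hsk⟩ := dvalue_eq_coe m s t hdv
        have hBAr2 : B ≤ Ar2 := by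
          rw [hr, hAr2] at hhi
          exact_mod_cast hhi
        have hup : dtW m s t (aSeqD m s t q i) ≤ ((Ar : ℤ) : WithTop ℤ) := by
          rw [hBi]
          show ddual m s t B ≤ _
          calc ddual m s t B ≤ ((t k : ℤ) : WithTop ℤ) :=
                ddual_le m s t hkm (by linarith [hsk ▸ hBAr2, hsk] : B ≤ s k)
            _ ≤ _ := by exact_mod_cast htk
        obtain ⟨B', hB', hB'le⟩ := WithTop.le_coe_iff.mp hup
        have hdd : dtW m s t (aSeqD m s t q i) = ddual m s t B := by rw [hBi]; rfl
        have hdl : dvalue m s t Ar1 < (B : WithBot ℤ) := by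
          rw [show j - i + 1 = r + 1 + 2 from by omega, arec (r + 1), hAr1] at hlo
          exact hlo
        have hlow : ((Ar1 : ℤ) : WithTop ℤ) < ddual m s t B := lower_key m s t hdl
        have hAr1B' : Ar1 < B' := by
          rw [← hdd, hB'] at hlow
          exact_mod_cast hlow
        refine ⟨B', ?_, ?_, ?_⟩
        · rw [brec i]
          exact hB'
        · rw [show j - (i + 2) + 1 = r + 1 from by omega, hAr1]
          exact_mod_cast hAr1B'
        · rw [show j - (i + 2) = r from by omega, hAr]
          exact_mod_cast hB'le
  -- second conclusion : b_j = p
  obtain ⟨B, hBj, hBlo, hBhi⟩ := sand j le_rfl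
  have hBp : B = p := by
    rw [show j - j + 1 = 1 from by omega] at hBlo
    rw [show j - j = 0 from by omega] at hBhi
    have h1 : (p - 1 : ℤ) < B := by
      have : ((p - 1 : ℤ) : WithBot ℤ) < (B : WithBot ℤ) := hBlo
      exact_mod_cast this
    have h2 : B ≤ p := by
      have : ((B : ℤ) : WithBot ℤ) ≤ ((p : ℤ) : WithBot ℤ) := hBhi
      exact_mod_cast this
    omega
  refine ⟨?_, by rw [hBj, hBp]⟩
  -- first conclusion : j ≤ l_q†
  -- q < n
  have hchain : ∀ i, i ≤ j → aSeq m s t p i ≤ ((p : ℤ) : WithBot ℤ) := by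
    intro i
    induction i with
    | zero => intro _; exact le_rfl
    | succ i IHi =>
      intro hij
      exact le_trans (key i (by omega)).2.le (IHi (by omega))
  have hqn : q ≠ n := by
    obtain ⟨⟨A, hA⟩, hdec⟩ := key (j - 1) (by omega)
    rw [show j - 1 + 1 = j from by omega, hq] at hdec
    have hAp : ((A : ℤ) : WithBot ℤ) ≤ ((p : ℤ) : WithBot ℤ) := hA ▸ hchain (j - 1) (by omega)
    have h1 : q < A := by rw [hA] at hdec; exact_mod_cast hdec
    have h2 : A ≤ p := by exact_mod_cast hAp
    intro h
    omega
  rw [lSeqD, if_neg hqn]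
  -- nonemptiness of the defining set
  have chain : ∀ (i0 : ℕ) (c : ℤ), aSeqD m s t q i0 = (c : WithTop ℤ) → ∀ k : ℕ,
      aSeqD m s t q (i0 + 2 * k) = ⊤ ∨
      ∃ B : ℤ, aSeqD m s t q (i0 + 2 * k) = (B : WithTop ℤ) ∧ c + 2 * k ≤ B := by
    intro i0 c hc k
    induction k with
    | zero => right; exact ⟨c, by simpa using hc, by simp⟩
    | succ k IHk =>
      rw [show i0 + 2 * (k + 1) = (i0 + 2 * k) + 2 from by ring, brec]
      rcases IHk with htop | ⟨B, hB, hge⟩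
      · left; rw [htop]; rfl
      · rw [hB]
        rcases eq_or_ne (ddual m s t B) ⊤ with h | h
        · left; exact h
        · right
          obtain ⟨B', hB'⟩ := WithTop.ne_top_iff_exists.mp h
          refine ⟨B', hB'.symm, ?_⟩
          have h2 : ((B + 2 : ℤ) : WithTop ℤ) ≤ ((B' : ℤ) : WithTop ℤ) := by
            rw [hB']; exact ddual_ge m s t hlen B
          have h3 : B + 2 ≤ B' := by exact_mod_cast h2
          push_cast
          push_cast at hge
          linarith
  set K : ℕ := (n + 1 - q).toNat with hKdef
  have hKval : (K : ℤ) = n + 1 - q := by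
    rw [hKdef]
    exact Int.toNat_of_nonneg (by
      have h2 : q < p := by
        obtain ⟨⟨A, hA⟩, hdec⟩ := key (j - 1) (by omega)
        rw [show j - 1 + 1 = j from by omega, hq, hA] at hdec
        have hAp : ((A : ℤ) : WithBot ℤ) ≤ ((p : ℤ) : WithBot ℤ) := hA ▸ hchain (j - 1) (by omega)
        have h1 : q < A := by exact_mod_cast hdec
        have h2 : A ≤ p := by exact_mod_cast hAp
        omega
      linarith)
  have htopE : aSeqD m s t q (2 * K + 2) = ⊤ := by
    have e : 2 * K + 2 = (0 + 2 * K) + 2 := by ring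
    rw [e, brec]
    rcases chain 0 q rfl K with h | ⟨B, hB, hge⟩
    · rw [h]; rfl
    · rw [hB]
      exact ddual_top m s t htn hlen (by
        have hK0 : (0 : ℤ) ≤ (K : ℤ) := Int.natCast_nonneg K
        push_cast at hge
        linarith [hKval])
  have htopO : aSeqD m s t q (2 * K + 3) = ⊤ := by
    have e : 2 * K + 3 = (1 + 2 * K) + 2 := by ring
    rw [e, brec]
    rcases chain 1 (q + 1) rfl K with h | ⟨B, hB, hge⟩
    · rw [h]; rfl
    · rw [hB]
      exact ddual_top m s t htn hlen (by
        push_cast at hge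
        linarith [hKval])
  apply le_csInf
  · refine ⟨2 * K + 1, by omega, ?_⟩
    have e1 : dtW m s t (aSeqD m s t q (2 * K + 1 - 1)) = aSeqD m s t q (2 * K + 2) := by
      rw [show 2 * K + 1 - 1 = 2 * K from by omega, ← brec]
    have e2 : dtW m s t (aSeqD m s t q (2 * K + 1)) = aSeqD m s t q (2 * K + 3) := by
      rw [← brec]
    rw [e1, e2, htopE, htopO]
  · rintro k ⟨hk1, hkeq⟩
    by_contra hkj
    push_neg at hkj
    have hkeq' : aSeqD m s t q (k + 1) = aSeqD m s t q (k + 2) := by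
      have e1 : dtW m s t (aSeqD m s t q (k - 1)) = aSeqD m s t q (k + 1) := by
        rw [show k + 1 = (k - 1) + 2 from by omega, ← brec]
      have e2 : dtW m s t (aSeqD m s t q k) = aSeqD m s t q (k + 2) := (brec k).symm
      rw [← e1, ← e2]
      exact hkeq
    rcases Nat.lt_or_ge (k + 2) (j + 1) with hcase | hcase
    · -- k + 2 ≤ j : contradiction with strict increase from the sandwich
      obtain ⟨B1, hB1, _, hB1hi⟩ := sand (k + 1) (by omega)
      obtain ⟨B2, hB2, hB2lo, _⟩ := sand (k + 2) (by omega)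
      obtain ⟨⟨A, hA⟩, _⟩ := key (j - (k + 1)) (by omega)
      rw [hA] at hB1hi
      rw [show j - (k + 2) + 1 = j - (k + 1) from by omega, hA] at hB2lo
      have h1 : B1 ≤ A := by exact_mod_cast hB1hi
      have h2 : A < B2 := by exact_mod_cast hB2lo
      rw [hB1, hB2] at hkeq'
      have : B1 = B2 := by exact_mod_cast hkeq'
      omega
    · -- k + 1 = j : contradiction with b_{j+1} > p
      have hkj' : k + 1 = j := by omega
      have hj2 : 2 ≤ j := by omega
      obtain ⟨B', hB', hB'lo, _⟩ := sand (j - 1) (by omega)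
      rw [show j - (j - 1) + 1 = 2 from by omega] at hB'lo
      have ha2 : aSeq m s t p 2 = dvalue m s t p := rfl
      rw [ha2] at hB'lo
      have hlow := lower_key m s t hB'lo
      have e3 : aSeqD m s t q (j + 1) = ddual m s t B' := by
        rw [show j + 1 = (j - 1) + 2 from by omega, brec, hB']
        rfl
      have e4 : aSeqD m s t q (k + 1) = ((p : ℤ) : WithTop ℤ) := by
        rw [hkj', hBj, hBp]
      rw [e4, show k + 2 = j + 1 from by omega, e3] at hkeq'
      rw [← hkeq'] at hlow
      exact lt_irrefl _ hlow
end

section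
/- For every integer p with 1 ≤ p ≤ n: l_p ≥ 2 if and only if p ∈ T. -/
section Aux

lemma dW_bot (m : ℕ) (s t : ℕ → ℤ) : dW m s t ⊥ = ⊥ := rfl

lemma dW_coe (m : ℕ) (s t : ℕ → ℤ) (x : ℤ) : dW m s t (x : WithBot ℤ) = dvalue m s t x := rfl

lemma aSeq_succ_succ (m : ℕ) (s t : ℕ → ℤ) (p : ℤ) (k : ℕ) :
    aSeq m s t p (k + 2) = dW m s t (aSeq m s t p k) := rfl

lemma dvalue_cases (m : ℕ) (s t : ℕ → ℤ)
    (hs0 : ∀ j : ℕ, j < m → 0 ≤ s j) (hlen : ∀ j : ℕ, j < m → s j + 2 ≤ t j)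
    (x : ℤ) :
    dvalue m s t x = ⊥ ∨ ∃ q : ℤ, dvalue m s t x = q ∧ 0 ≤ q ∧ q ≤ x - 2 := by
  rcases hb : dvalue m s t x with _ | q
  · exact Or.inl rfl
  · right
    have h : dvalue m s t x = (q : WithBot ℤ) := hb
    refine ⟨q, rfl, ?_, ?_⟩
    · have hne : ((Finset.range m).filter (fun j => t j ≤ x)).Nonempty := by
        by_contra hc
        rw [Finset.not_nonempty_iff_eq_empty] at hc
        rw [dvalue, hc, Finset.sup_empty] at h
        exact absurd h (by simp)
      obtain ⟨j, hj⟩ := hne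
      have hjm : j < m := Finset.mem_range.1 (Finset.mem_filter.1 hj).1
      have hle : (s j : WithBot ℤ) ≤ dvalue m s t x := by
        rw [dvalue]; exact Finset.le_sup (f := fun j => (s j : WithBot ℤ)) hj
      rw [h] at hle
      have := WithBot.coe_le_coe.1 hle
      linarith [hs0 j hjm]
    · have hle : dvalue m s t x ≤ ((x - 2 : ℤ) : WithBot ℤ) := by
        apply Finset.sup_le
        intro j hj
        have hjm : j < m := Finset.mem_range.1 (Finset.mem_filter.1 hj).1
        have htx : t j ≤ x := (Finset.mem_filter.1 hj).2
        exact_mod_cast by linarith [hlen j hjm]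
      rw [h] at hle
      exact_mod_cast hle

lemma aSeq_cases (m : ℕ) (s t : ℕ → ℤ)
    (hs0 : ∀ j : ℕ, j < m → 0 ≤ s j) (hlen : ∀ j : ℕ, j < m → s j + 2 ≤ t j)
    (p : ℤ) (k : ℕ) :
    aSeq m s t p (k + 2) = ⊥ ∨ ∃ q : ℤ, aSeq m s t p (k + 2) = q ∧ 0 ≤ q := by
  rw [aSeq_succ_succ]
  rcases hx : aSeq m s t p k with _ | x
  · exact Or.inl rfl
  · show dvalue m s t x = ⊥ ∨ ∃ q : ℤ, dvalue m s t x = (q : WithBot ℤ) ∧ 0 ≤ q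
    rcases dvalue_cases m s t hs0 hlen x with h | ⟨q, hq, hq0, _⟩
    · exact Or.inl h
    · exact Or.inr ⟨q, hq, hq0⟩

lemma aSeq_bound (m : ℕ) (s t : ℕ → ℤ)
    (hs0 : ∀ j : ℕ, j < m → 0 ≤ s j) (hlen : ∀ j : ℕ, j < m → s j + 2 ≤ t j)
    (p : ℤ) :
    ∀ i : ℕ, aSeq m s t p i = ⊥ ∨ ∃ q : ℤ, aSeq m s t p i = q ∧ q ≤ p - i + 1 := by
  intro i
  induction i using Nat.strong_induction_on with
  | _ i ih =>
    match i with
    | 0 => exact Or.inr ⟨p, rfl, by norm_num⟩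
    | 1 => exact Or.inr ⟨p - 1, rfl, by push_cast; omega⟩
    | (k + 2) =>
      rw [aSeq_succ_succ]
      rcases ih k (by omega) with h | ⟨q, hq, hqle⟩
      · rw [h]; exact Or.inl rfl
      · rw [hq]
        show dvalue m s t q = ⊥ ∨ ∃ r : ℤ, dvalue m s t q = (r : WithBot ℤ) ∧ r ≤ p - (↑k + 2) + 1
        rcases dvalue_cases m s t hs0 hlen q with h | ⟨r, hr, _, hr2⟩
        · exact Or.inl h
        · exact Or.inr ⟨r, hr, by push_cast; push_cast at hqle; omega⟩

lemma exists_stab (m : ℕ) (s t : ℕ → ℤ)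
    (hs0 : ∀ j : ℕ, j < m → 0 ≤ s j) (hlen : ∀ j : ℕ, j < m → s j + 2 ≤ t j)
    (p : ℤ) (hp1 : 1 ≤ p) :
    ∃ j : ℕ, 1 ≤ j ∧ dW m s t (aSeq m s t p (j - 1)) = dW m s t (aSeq m s t p j) := by
  have hbot : ∀ i : ℕ, 2 ≤ i → p + 2 ≤ (i : ℤ) → aSeq m s t p i = ⊥ := by
    intro i hi2 hip
    obtain ⟨k, rfl⟩ : ∃ k, i = k + 2 := ⟨i - 2, by omega⟩
    rcases aSeq_cases m s t hs0 hlen p k with h | ⟨q, hq, hq0⟩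
    · exact h
    · rcases aSeq_bound m s t hs0 hlen p (k + 2) with h | ⟨r, hr, hrle⟩
      · exact h
      · rw [hq] at hr
        have : q = r := by exact_mod_cast hr
        push_cast at hip hrle
        omega
  set i0 : ℕ := (p + 2).toNat with hi0
  have hi0z : (i0 : ℤ) = p + 2 := Int.toNat_of_nonneg (by omega)
  have h1 : aSeq m s t p i0 = ⊥ := hbot i0 (by omega) (by omega)
  have h2 : aSeq m s t p (i0 + 1) = ⊥ := hbot (i0 + 1) (by omega) (by push_cast; omega)
  refine ⟨i0 + 1, by omega, ?_⟩
  rw [Nat.add_sub_cancel, h1, h2]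

end Aux

theorem lp_ge_two_iff_mem_T
    (n : ℤ) (m : ℕ) (s t : ℕ → ℤ)
    (hn : 0 ≤ n)
    (hsmono : ∀ i j : ℕ, i < j → j < m → s i < s j)
    (htmono : ∀ i j : ℕ, i < j → j < m → t i < t j)
    (hs0 : ∀ j : ℕ, j < m → 0 ≤ s j)
    (htn : ∀ j : ℕ, j < m → t j ≤ n)
    (hlen : ∀ j : ℕ, j < m → s j + 2 ≤ t j)
    (p : ℤ) (hp1 : 1 ≤ p) (hpn : p ≤ n) :
    2 ≤ lSeq m s t p ↔ ∃ j : ℕ, j < m ∧ t j = p := by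
  have hp0 : p ≠ 0 := by omega
  have hlS : lSeq m s t p =
      sInf {j : ℕ | 1 ≤ j ∧ dW m s t (aSeq m s t p (j - 1)) = dW m s t (aSeq m s t p j)} := by
    rw [lSeq, if_neg hp0]
  set S : Set ℕ :=
    {j : ℕ | 1 ≤ j ∧ dW m s t (aSeq m s t p (j - 1)) = dW m s t (aSeq m s t p j)} with hSdef
  have hne : S.Nonempty := exists_stab m s t hs0 hlen p hp1
  have hone : (1 ∈ S) ↔ dvalue m s t p = dvalue m s t (p - 1) := by
    constructor
    · intro h
      have := h.2
      simpa [aSeq, dW_coe] using this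
    · intro h
      refine ⟨le_refl 1, ?_⟩
      simpa [aSeq, dW_coe] using h
  have hkey : dvalue m s t p = dvalue m s t (p - 1) ↔ ¬ ∃ j : ℕ, j < m ∧ t j = p := by
    constructor
    · intro heq
      rintro ⟨j, hjm, htj⟩
      have hmem : j ∈ (Finset.range m).filter (fun j => t j ≤ p) :=
        Finset.mem_filter.2 ⟨Finset.mem_range.2 hjm, le_of_eq htj⟩
      have hle : (s j : WithBot ℤ) ≤ dvalue m s t p := by
        rw [dvalue]; exact Finset.le_sup (f := fun j => (s j : WithBot ℤ)) hmem
      have hlt : dvalue m s t (p - 1) < (s j : WithBot ℤ) := by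
        rw [dvalue]
        refine (Finset.sup_lt_iff (WithBot.bot_lt_coe _)).2 ?_
        intro j' hj'
        have hj'm : j' < m := Finset.mem_range.1 (Finset.mem_filter.1 hj').1
        have ht' : t j' ≤ p - 1 := (Finset.mem_filter.1 hj').2
        have hj'j : j' < j := by
          by_contra hc
          push_neg at hc
          rcases lt_or_eq_of_le hc with hlt' | rfl
          · have := htmono j j' hlt' hj'm
            omega
          · omega
        exact_mod_cast hsmono j' j hj'j hjm
      rw [heq] at hle
      exact absurd (lt_of_lt_of_le hlt hle) (lt_irrefl _)
    · intro hno
      unfold dvalue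
      congr 1
      apply Finset.filter_congr
      intro j hj
      have hjm : j < m := Finset.mem_range.1 hj
      have : t j ≠ p := fun h => hno ⟨j, hjm, h⟩
      constructor <;> intro h' <;> omega
  rw [hlS]
  constructor
  · intro h2
    by_contra hcon
    have h1 : 1 ∈ S := hone.2 (hkey.2 hcon)
    have hle1 := Nat.sInf_le h1
    exact absurd (le_trans h2 hle1) (by norm_num)
  · rintro hex
    have h1 : 1 ∉ S := fun h => (hkey.1 (hone.1 h)) hex
    have hmem := Nat.sInf_mem hne
    have hge1 : 1 ≤ sInf S := hmem.1
    have hneq : sInf S ≠ 1 := fun h => h1 (h ▸ hmem)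
    exact Nat.lt_of_le_of_ne hge1 (Ne.symm hneq)
end
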